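/- Let (M, d) be a proper geodesic metric space and let γ be a line in M with the uniqueness property. If γ₁ and γ₂ are lines with γ₁ ≺ γ and γ₂ ≺ γ, then γ₁ ∼ γ₂ if and only if B_{γ₁}(x) = B_{γ₂}(x) for all x ∈ M. -/

import Mathlib

open Filter Topology

variable {M : Type*} [MetricSpace M]

/-- A ray in a metric space: a map `γ` defined (in effect) on `[0, ∞)` with
`d(γ s, γ t) = |s - t|` for all `s, t ≥ 0`. -/
def IsRay (γ : ℝ → M) : Prop :=
  ∀ s t : ℝ, 0 ≤ s → 0 ≤ t → dist (γ s) (γ t) = |s - t|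

/-- A line in a metric space: a map `γ : ℝ → M` with `d(γ s, γ t) = |s - t|`. -/
def IsLine (γ : ℝ → M) : Prop :=
  ∀ s t : ℝ, dist (γ s) (γ t) = |s - t|

/-- The Busemann function of a ray `γ`:
`b_γ(x) = lim_{t → ∞} (d(x, γ t) - t)`, which exists and equals the infimum
since `t ↦ d(x, γ t) - t` is nonincreasing on `[0, ∞)` and bounded below. -/
noncomputable def busemann (γ : ℝ → M) (x : M) : ℝ :=
  ⨅ t : Set.Ici (0 : ℝ), (dist x (γ t) - (t : ℝ))

/-- For a line `γ`, the negative ray `γ⁻(t) = γ(-t)`.  (The positive ray `γ⁺`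
is just `γ` itself, restricted to `[0, ∞)`.) -/
def negRay (γ : ℝ → M) : ℝ → M := fun t => γ (-t)

/-- The barrier function of a line `γ`: `B_γ = b_{γ⁺} + b_{γ⁻}`. -/
noncomputable def barrier (γ : ℝ → M) (x : M) : ℝ :=
  busemann γ x + busemann (negRay γ) x

/-- `γ' ≺ γ`: the barrier of `γ` vanishes at `γ' 0` and both Busemann functions
`b_{γ⁺}`, `b_{γ⁻}` calibrate `γ'` (every forward translate of `γ'` is a coray to
`γ⁺` and every backward translate is a coray to `γ⁻`). -/
def Prec (γ' γ : ℝ → M) : Prop :=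
  busemann γ (γ' 0) + busemann (negRay γ) (γ' 0) = 0 ∧
  ∀ t : ℝ, busemann γ (γ' t) = busemann γ (γ' 0) - t ∧
    busemann (negRay γ) (γ' t) = busemann (negRay γ) (γ' 0) + t

/-- A geodesic metric space: any two points are joined by a minimizing geodesic
segment. -/
def IsGeodesicSpace (M : Type*) [MetricSpace M] : Prop :=
  ∀ x y : M, ∃ σ : ℝ → M, σ 0 = x ∧ σ (dist x y) = y ∧
    ∀ s t : ℝ, s ∈ Set.Icc 0 (dist x y) → t ∈ Set.Icc 0 (dist x y) →
      dist (σ s) (σ t) = |s - t|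

/-- `γ'` is a coray to the ray `γ`: there are `tᵢ → ∞`, points `xᵢ → γ' 0` and
minimal geodesic segments `cᵢ` from `xᵢ` to `γ (tᵢ)` of length `Tᵢ = d(xᵢ, γ tᵢ) → ∞`
converging to `γ'` uniformly on compact subintervals of `[0, ∞)`. -/
def IsCoray (γ' γ : ℝ → M) : Prop :=
  ∃ (t : ℕ → ℝ) (x : ℕ → M) (c : ℕ → ℝ → M),
    (∀ i, 0 ≤ t i) ∧
    Tendsto t atTop atTop ∧
    Tendsto x atTop (𝓝 (γ' 0)) ∧
    (∀ i, c i 0 = x i) ∧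
    (∀ i, c i (dist (x i) (γ (t i))) = γ (t i)) ∧
    (∀ i, ∀ s s' : ℝ, s ∈ Set.Icc 0 (dist (x i) (γ (t i))) →
      s' ∈ Set.Icc 0 (dist (x i) (γ (t i))) → dist (c i s) (c i s') = |s - s'|) ∧
    Tendsto (fun i => dist (x i) (γ (t i))) atTop atTop ∧
    (∀ K > (0 : ℝ), ∀ ε > (0 : ℝ), ∃ N : ℕ, ∀ i ≥ N,
      ∀ s ∈ Set.Icc (0 : ℝ) K, dist (c i s) (γ' s) < ε)

/-- The line `γ` has the uniqueness property: through each point of the zero set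
of `B_γ` there is at most one line `γ''` with `γ'' ≺ γ`. -/
def HasUniqueCalibLine (γ : ℝ → M) : Prop :=
  ∀ x : M, barrier γ x = 0 →
    ∀ γ₁ γ₂ : ℝ → M, IsLine γ₁ → IsLine γ₂ → γ₁ 0 = x → γ₂ 0 = x →
      Prec γ₁ γ → Prec γ₂ γ → γ₁ = γ₂

section Aux

variable {γ δ σ : ℝ → M}

instance : Nonempty (Set.Ici (0:ℝ)) := ⟨⟨0, Set.self_mem_Ici⟩⟩

theorem isRay_of_isLine (h : IsLine γ) : IsRay γ := fun s t _ _ => h s t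

theorem negRay_isLine (h : IsLine γ) : IsLine (negRay γ) := by
  intro s t
  have := h (-s) (-t)
  rw [neg_sub_neg, abs_sub_comm] at this
  exact this

theorem busemann_bddBelow (h : IsRay γ) (x : M) :
    BddBelow (Set.range fun t : Set.Ici (0:ℝ) => dist x (γ t) - (t:ℝ)) := by
  refine ⟨-dist x (γ 0), ?_⟩
  rintro _ ⟨⟨t, ht⟩, rfl⟩
  have h1 := h t 0 ht le_rfl
  rw [sub_zero, abs_of_nonneg ht] at h1
  have h2 := dist_triangle (γ t) x (γ 0)
  rw [dist_comm (γ t) x] at h2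
  simp only
  linarith [dist_comm (γ t) (γ 0) ▸ h1]

theorem busemann_le (h : IsRay γ) (x : M) {t : ℝ} (ht : 0 ≤ t) :
    busemann γ x ≤ dist x (γ t) - t :=
  ciInf_le (busemann_bddBelow h x) ⟨t, ht⟩

theorem le_busemann {a : ℝ} {x : M} (h : ∀ t : ℝ, 0 ≤ t → a ≤ dist x (γ t) - t) :
    a ≤ busemann γ x :=
  le_ciInf fun ⟨t, ht⟩ => h t ht

theorem busemann_lipschitz (h : IsRay γ) (x y : M) :
    busemann γ x ≤ busemann γ y + dist x y := by
  have key : busemann γ x - dist x y ≤ busemann γ y := by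
    apply le_busemann
    intro t ht
    have h1 := busemann_le h x ht
    have h2 := dist_triangle x y (γ t)
    linarith
  linarith

theorem busemann_line_apply (h : IsLine γ) (s : ℝ) : busemann γ (γ s) = -s := by
  apply le_antisymm
  · have hm : (0:ℝ) ≤ max s 0 := le_max_right _ _
    have h1 := busemann_le (isRay_of_isLine h) (γ s) hm
    rw [h s (max s 0), abs_of_nonpos (by simp [le_max_left])] at h1
    linarith
  · apply le_busemann
    intro t ht
    rw [h s t]
    have := le_abs_self (t - s)
    rw [abs_sub_comm] at this
    linarith

theorem busemann_negRay_line_apply (h : IsLine γ) (s : ℝ) :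
    busemann (negRay γ) (γ s) = s := by
  have := busemann_line_apply (negRay_isLine h) (-s)
  simp only [negRay, neg_neg] at this
  linarith

theorem barrier_nonneg (h : IsLine γ) (x : M) : 0 ≤ barrier γ x := by
  rw [barrier]
  have h1 : -busemann (negRay γ) x ≤ busemann γ x := by
    apply le_busemann
    intro t ht
    have key : t - dist x (γ t) ≤ busemann (negRay γ) x := by
      apply le_busemann
      intro s hs
      simp only [negRay]
      have hd := h t (-s)
      rw [sub_neg_eq_add, abs_of_nonneg (by linarith)] at hd
      have htr := dist_triangle (γ t) x (γ (-s))
      rw [dist_comm (γ t) x] at htr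
      linarith
    linarith
  linarith

theorem barrier_line_apply (h : IsLine γ) (s : ℝ) : barrier γ (γ s) = 0 := by
  rw [barrier, busemann_line_apply h, busemann_negRay_line_apply h]; ring

theorem calib_pos (hγ : IsRay γ) (hd : Prec δ γ) (x : M) :
    busemann γ x ≤ busemann γ (δ 0) + busemann δ x := by
  have key : busemann γ x - busemann γ (δ 0) ≤ busemann δ x := by
    apply le_busemann
    intro t ht
    have h1 := busemann_lipschitz hγ x (δ t)
    have h2 := (hd.2 t).1
    linarith
  linarith

theorem calib_neg (hγ : IsLine γ) (hd : Prec δ γ) (x : M) :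
    busemann (negRay γ) x ≤ busemann (negRay γ) (δ 0) + busemann (negRay δ) x := by
  have key : busemann (negRay γ) x - busemann (negRay γ) (δ 0) ≤ busemann (negRay δ) x := by
    apply le_busemann
    intro s hs
    have h1 := busemann_lipschitz (isRay_of_isLine (negRay_isLine hγ)) x (δ (-s))
    have h2 := (hd.2 (-s)).2
    simp only [negRay]
    linarith
  linarith

theorem barrier_mono (hγ : IsLine γ) (hd : Prec δ γ) (x : M) :
    barrier γ x ≤ barrier δ x := by
  have h1 := calib_pos (isRay_of_isLine hγ) hd x
  have h2 := calib_neg hγ hd x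
  have hz := hd.1
  rw [barrier, barrier]
  linarith

theorem prec_trans (hγ : IsLine γ) (hσδ : Prec σ δ) (hδγ : Prec δ γ) : Prec σ γ := by
  have key : ∀ t : ℝ,
      busemann γ (σ t) = busemann γ (δ 0) + busemann δ (σ 0) - t ∧
      busemann (negRay γ) (σ t) = busemann (negRay γ) (δ 0) + busemann (negRay δ) (σ 0) + t := by
    intro t
    have hA := calib_pos (isRay_of_isLine hγ) hδγ (σ t)
    have hB := calib_neg hγ hδγ (σ t)
    have h1 := (hσδ.2 t).1
    have h2 := (hσδ.2 t).2
    have h0 := hσδ.1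
    have hz := hδγ.1
    have hnn := barrier_nonneg hγ (σ t)
    rw [barrier] at hnn
    constructor <;> linarith
  refine ⟨?_, fun t => ?_⟩
  · have k0 := key 0
    have hz := hδγ.1
    have h0 := hσδ.1
    linarith [k0.1, k0.2]
  · have kt := key t
    have k0 := key 0
    exact ⟨by linarith [kt.1, k0.1], by linarith [kt.2, k0.2]⟩

end Aux

section Exist

variable {γ δ : ℝ → M}

theorem tendsto_dist_sub (h : IsRay γ) (x : M) :
    Tendsto (fun n : ℕ => dist x (γ n) - n) atTop (𝓝 (busemann γ x)) := by
  have hanti : Antitone (fun n : ℕ => dist x (γ n) - (n:ℝ)) := by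
    intro n m hnm
    have hd := h n m (Nat.cast_nonneg n) (Nat.cast_nonneg m)
    have hc : (n:ℝ) ≤ m := Nat.cast_le.mpr hnm
    rw [abs_of_nonpos (by linarith)] at hd
    have htr := dist_triangle x (γ n) (γ m)
    simp only
    linarith
  have hbdd : BddBelow (Set.range fun n : ℕ => dist x (γ n) - (n:ℝ)) := by
    refine ⟨busemann γ x, ?_⟩
    rintro _ ⟨n, rfl⟩
    exact busemann_le h x (Nat.cast_nonneg n)
  have htend := tendsto_atTop_ciInf hanti hbdd
  have heq : (⨅ n : ℕ, (dist x (γ n) - (n:ℝ))) = busemann γ x := by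
    apply le_antisymm
    · apply le_of_forall_pos_le_add
      intro ε hε
      have hlt : busemann γ x < busemann γ x + ε := by linarith
      obtain ⟨⟨t, ht⟩, hft⟩ := exists_lt_of_ciInf_lt hlt
      simp only at hft
      have hn : (t:ℝ) ≤ (⌈t⌉₊ : ℝ) := Nat.le_ceil t
      have : dist x (γ ⌈t⌉₊) - (⌈t⌉₊:ℝ) ≤ dist x (γ t) - t := by
        have hd := h t ⌈t⌉₊ ht (Nat.cast_nonneg _)
        rw [abs_of_nonpos (by linarith)] at hd
        have htr := dist_triangle x (γ t) (γ ⌈t⌉₊)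
        linarith
      calc (⨅ n : ℕ, (dist x (γ n) - (n:ℝ))) ≤ dist x (γ ⌈t⌉₊) - (⌈t⌉₊:ℝ) := ciInf_le hbdd _
        _ ≤ busemann γ x + ε := by linarith
    · exact le_ciInf fun n => busemann_le h x (Nat.cast_nonneg n)
  rwa [heq] at htend

theorem busemann_lipschitzWith (h : IsRay γ) : LipschitzWith 1 (busemann γ (M := M)) := by
  apply LipschitzWith.of_dist_le_mul
  intro x y
  rw [Real.dist_eq, NNReal.coe_one, one_mul, abs_sub_le_iff]
  constructor
  · have := busemann_lipschitz h x y; linarith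
  · have := busemann_lipschitz h y x; rw [dist_comm] at this; linarith

theorem exists_calib_line [ProperSpace M] (hM : IsGeodesicSpace M) (hδ : IsLine δ)
    (x : M) (hx : barrier δ x = 0) :
    ∃ σ : ℝ → M, IsLine σ ∧ σ 0 = x ∧ Prec σ δ := by
  classical
  set a := busemann δ x with ha
  have hxneg : busemann (negRay δ) x = -a := by rw [barrier] at hx; linarith
  -- geodesics toward +∞ and -∞
  choose c hc0 hc1 hc2 using fun n : ℕ => hM x (δ (n:ℝ))
  choose c' hc'0 hc'1 hc'2 using fun n : ℕ => hM x (δ (-(n:ℝ)))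
  set L : ℕ → ℝ := fun n => dist x (δ (n:ℝ)) with hL
  set L' : ℕ → ℝ := fun n => dist x (δ (-(n:ℝ))) with hL'
  have hLtend : Tendsto L atTop atTop := by
    apply tendsto_atTop_mono (f := fun n : ℕ => (n:ℝ) - dist x (δ 0))
    · intro n
      have hd := hδ 0 (n:ℝ)
      rw [abs_of_nonpos (sub_nonpos.mpr (Nat.cast_nonneg n)), neg_sub, sub_zero] at hd
      have := dist_triangle (δ 0) x (δ (n:ℝ))
      rw [dist_comm (δ 0) x] at this
      simp only [hL]
      linarith
    · exact tendsto_atTop_add_const_right _ _ tendsto_natCast_atTop_atTop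
  have hL'tend : Tendsto L' atTop atTop := by
    apply tendsto_atTop_mono (f := fun n : ℕ => (n:ℝ) - dist x (δ 0))
    · intro n
      have hd := hδ 0 (-(n:ℝ))
      rw [zero_sub, neg_neg, abs_of_nonneg (Nat.cast_nonneg n)] at hd
      have := dist_triangle (δ 0) x (δ (-(n:ℝ)))
      rw [dist_comm (δ 0) x] at this
      simp only [hL']
      linarith
    · exact tendsto_atTop_add_const_right _ _ tendsto_natCast_atTop_atTop
  -- epsilons
  have hεtend : Tendsto (fun n : ℕ => L n - n - a) atTop (𝓝 0) := by
    have := (tendsto_dist_sub (isRay_of_isLine hδ) x).sub_const a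
    simpa [hL, ← ha] using this
  have hε'tend : Tendsto (fun n : ℕ => L' n - n + a) atTop (𝓝 0) := by
    have h1 := (tendsto_dist_sub (isRay_of_isLine (negRay_isLine hδ)) x).sub_const (-a)
    rw [hxneg] at h1
    simp only [sub_neg_eq_add, neg_add_cancel] at h1
    exact h1.congr fun n => by simp [negRay, hL']
  have hε : ∀ n, 0 ≤ L n - n - a := fun n => by
    have := busemann_le (isRay_of_isLine hδ) x (Nat.cast_nonneg n); simp only [hL]; linarith
  have hε' : ∀ n, 0 ≤ L' n - n + a := fun n => by
    have := busemann_le (isRay_of_isLine (negRay_isLine hδ)) x (Nat.cast_nonneg n)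
    simp only [negRay] at this
    simp only [hL']; linarith
  -- combined family
  set d : ℕ → ℝ → M := fun n t => if 0 ≤ t then c n t else c' n (-t) with hd
  have hdist : ∀ t : ℝ, ∀ᶠ n in atTop, dist x (d n t) = |t| := by
    intro t
    filter_upwards [hLtend.eventually_ge_atTop (|t|), hL'tend.eventually_ge_atTop (|t|)]
      with n hn hn'
    by_cases ht : 0 ≤ t
    · have := hc2 n 0 t ⟨le_rfl, dist_nonneg⟩ ⟨ht, by rwa [abs_of_nonneg ht] at hn⟩
      rw [hc0 n] at this
      rw [hd]; simp only [ht, if_pos]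
      rw [this, zero_sub, abs_neg]
    · push_neg at ht
      have hmem : -t ∈ Set.Icc 0 (dist x (δ (-(n:ℝ)))) :=
        ⟨by linarith, by rwa [abs_of_neg ht] at hn'⟩
      have := hc'2 n 0 (-t) ⟨le_rfl, dist_nonneg⟩ hmem
      rw [hc'0 n] at this
      rw [hd]; simp only [not_le.mpr ht, if_neg, if_false]
      rw [this, zero_sub, abs_neg, abs_neg]
  -- Busemann values along d
  have hBpos : ∀ t : ℝ, Tendsto (fun n => busemann δ (d n t)) atTop (𝓝 (a - t)) := by
    intro t
    apply tendsto_of_tendsto_of_tendsto_of_le_of_le'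
      (g := fun n : ℕ => (a - t) - (if 0 ≤ t then L n - n - a else L' n - n + a))
      (h := fun n : ℕ => (a - t) + (if 0 ≤ t then L n - n - a else L' n - n + a))
    · by_cases ht : 0 ≤ t
      · simp only [ht, if_pos]
        simpa using tendsto_const_nhds (x := a - t) (f := atTop (α := ℕ)) |>.sub hεtend
      · simp only [ht, if_neg, if_false]
        simpa using tendsto_const_nhds (x := a - t) (f := atTop (α := ℕ)) |>.sub hε'tend
    · by_cases ht : 0 ≤ t
      · simp only [ht, if_pos]
        simpa using tendsto_const_nhds (x := a - t) (f := atTop (α := ℕ)) |>.add hεtend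
      · simp only [ht, if_neg, if_false]
        simpa using tendsto_const_nhds (x := a - t) (f := atTop (α := ℕ)) |>.add hε'tend
    · -- lower bound
      filter_upwards [hdist t, hLtend.eventually_ge_atTop (|t|), hL'tend.eventually_ge_atTop (|t|)]
        with n hn hnL hnL'
      have hen := hε n
      have hen' := hε' n
      by_cases ht : 0 ≤ t
      · simp only [ht, if_pos]
        have hlip := busemann_lipschitz (isRay_of_isLine hδ) x (d n t)
        rw [hn, abs_of_nonneg ht] at hlip
        linarith
      · simp only [ht, if_neg, if_false]
        push_neg at ht
        have hnn := barrier_nonneg hδ (d n t)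
        rw [barrier] at hnn
        have hub : busemann (negRay δ) (d n t) ≤ (L' n - (-t)) - n := by
          have hb := busemann_le (isRay_of_isLine (negRay_isLine hδ)) (d n t) (Nat.cast_nonneg n)
          have hdd : dist (d n t) (negRay δ (n:ℝ)) = L' n - (-t) := by
            simp only [negRay]
            rw [hd]; simp only [not_le.mpr ht, if_neg, if_false]
            have hmem : -t ∈ Set.Icc 0 (dist x (δ (-(n:ℝ)))) :=
              ⟨by linarith, by rwa [abs_of_neg ht] at hnL'⟩
            have hend : dist x (δ (-(n:ℝ))) ∈ Set.Icc 0 (dist x (δ (-(n:ℝ)))) :=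
              ⟨dist_nonneg, le_rfl⟩
            have := hc'2 n (-t) (dist x (δ (-(n:ℝ)))) hmem hend
            rw [hc'1 n] at this
            rw [this, abs_of_nonpos (by simp only [hL'] at hnL' ⊢; linarith [hmem.2])]
            simp only [hL']; ring
          rw [hdd] at hb
          linarith
        linarith
    · -- upper bound
      filter_upwards [hdist t, hLtend.eventually_ge_atTop (|t|), hL'tend.eventually_ge_atTop (|t|)]
        with n hn hnL hnL'
      have hen := hε n
      have hen' := hε' n
      by_cases ht : 0 ≤ t
      · simp only [ht, if_pos]
        have hb := busemann_le (isRay_of_isLine hδ) (d n t) (Nat.cast_nonneg n)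
        have hdd : dist (d n t) (δ (n:ℝ)) = L n - t := by
          rw [hd]; simp only [ht, if_pos]
          have hmem : t ∈ Set.Icc 0 (dist x (δ (n:ℝ))) :=
            ⟨ht, by rwa [abs_of_nonneg ht] at hnL⟩
          have hend : dist x (δ (n:ℝ)) ∈ Set.Icc 0 (dist x (δ (n:ℝ))) := ⟨dist_nonneg, le_rfl⟩
          have := hc2 n t (dist x (δ (n:ℝ))) hmem hend
          rw [hc1 n] at this
          rw [this, abs_of_nonpos (by linarith [hmem.2])]
          simp only [hL]; ring
        rw [hdd] at hb
        linarith
      · simp only [ht, if_neg, if_false]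
        push_neg at ht
        have hlip := busemann_lipschitz (isRay_of_isLine hδ) (d n t) x
        rw [dist_comm (d n t) x, hn, abs_of_neg ht] at hlip
        linarith
  have hBneg : ∀ t : ℝ, Tendsto (fun n => busemann (negRay δ) (d n t)) atTop (𝓝 (-a + t)) := by
    intro t
    apply tendsto_of_tendsto_of_tendsto_of_le_of_le'
      (g := fun n : ℕ => (-a + t) - (if 0 ≤ t then L n - n - a else L' n - n + a))
      (h := fun n : ℕ => (-a + t) + (if 0 ≤ t then L n - n - a else L' n - n + a))
    · by_cases ht : 0 ≤ t
      · simp only [ht, if_pos]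
        simpa using tendsto_const_nhds (x := -a + t) (f := atTop (α := ℕ)) |>.sub hεtend
      · simp only [ht, if_neg, if_false]
        simpa using tendsto_const_nhds (x := -a + t) (f := atTop (α := ℕ)) |>.sub hε'tend
    · by_cases ht : 0 ≤ t
      · simp only [ht, if_pos]
        simpa using tendsto_const_nhds (x := -a + t) (f := atTop (α := ℕ)) |>.add hεtend
      · simp only [ht, if_neg, if_false]
        simpa using tendsto_const_nhds (x := -a + t) (f := atTop (α := ℕ)) |>.add hε'tend
    · -- lower bound
      filter_upwards [hdist t, hLtend.eventually_ge_atTop (|t|), hL'tend.eventually_ge_atTop (|t|)]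
        with n hn hnL hnL'
      have hen := hε n
      have hen' := hε' n
      by_cases ht : 0 ≤ t
      · simp only [ht, if_pos]
        have hnn := barrier_nonneg hδ (d n t)
        rw [barrier] at hnn
        have hub : busemann δ (d n t) ≤ (L n - t) - n := by
          have hb := busemann_le (isRay_of_isLine hδ) (d n t) (Nat.cast_nonneg n)
          have hdd : dist (d n t) (δ (n:ℝ)) = L n - t := by
            rw [hd]; simp only [ht, if_pos]
            have hmem : t ∈ Set.Icc 0 (dist x (δ (n:ℝ))) :=
              ⟨ht, by rwa [abs_of_nonneg ht] at hnL⟩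
            have hend : dist x (δ (n:ℝ)) ∈ Set.Icc 0 (dist x (δ (n:ℝ))) := ⟨dist_nonneg, le_rfl⟩
            have := hc2 n t (dist x (δ (n:ℝ))) hmem hend
            rw [hc1 n] at this
            rw [this, abs_of_nonpos (by linarith [hmem.2])]
            simp only [hL]; ring
          rw [hdd] at hb
          linarith
        linarith
      · simp only [ht, if_neg, if_false]
        push_neg at ht
        have hlip := busemann_lipschitz (isRay_of_isLine (negRay_isLine hδ)) x (d n t)
        rw [hn, abs_of_neg ht, hxneg] at hlip
        linarith
    · -- upper bound
      filter_upwards [hdist t, hLtend.eventually_ge_atTop (|t|), hL'tend.eventually_ge_atTop (|t|)]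
        with n hn hnL hnL'
      have hen := hε n
      have hen' := hε' n
      by_cases ht : 0 ≤ t
      · simp only [ht, if_pos]
        have hlip := busemann_lipschitz (isRay_of_isLine (negRay_isLine hδ)) (d n t) x
        rw [dist_comm (d n t) x, hn, abs_of_nonneg ht, hxneg] at hlip
        linarith
      · simp only [ht, if_neg, if_false]
        push_neg at ht
        have hb := busemann_le (isRay_of_isLine (negRay_isLine hδ)) (d n t) (Nat.cast_nonneg n)
        have hdd : dist (d n t) (negRay δ (n:ℝ)) = L' n - (-t) := by
          simp only [negRay]
          rw [hd]; simp only [not_le.mpr ht, if_neg, if_false]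
          have hmem : -t ∈ Set.Icc 0 (dist x (δ (-(n:ℝ)))) :=
            ⟨by linarith, by rwa [abs_of_neg ht] at hnL'⟩
          have hend : dist x (δ (-(n:ℝ))) ∈ Set.Icc 0 (dist x (δ (-(n:ℝ)))) :=
            ⟨dist_nonneg, le_rfl⟩
          have := hc'2 n (-t) (dist x (δ (-(n:ℝ)))) hmem hend
          rw [hc'1 n] at this
          rw [this, abs_of_nonpos (by simp only [hL'] at hnL' ⊢; linarith [hmem.2])]
          simp only [hL']; ring
        rw [hdd] at hb
        linarith
  -- ultrafilter limit
  set U : Ultrafilter ℕ := Ultrafilter.of atTop with hU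
  have hUle : (U : Filter ℕ) ≤ atTop := Ultrafilter.of_le _
  have hlim : ∀ t : ℝ, ∃ p : M, Tendsto (fun n => d n t) U (𝓝 p) := by
    intro t
    have hball : ∀ᶠ n in (U : Filter ℕ), d n t ∈ Metric.closedBall x |t| := by
      apply hUle
      filter_upwards [hdist t] with n hn
      rw [Metric.mem_closedBall, dist_comm]
      exact le_of_eq hn
    have hle : (U.map fun n => d n t : Filter M) ≤ 𝓟 (Metric.closedBall x |t|) := by
      rw [le_principal_iff]
      exact mem_map.mpr hball
    obtain ⟨p, _, hp⟩ := (isCompact_closedBall x |t|).ultrafilter_le_nhds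
      (U.map fun n => d n t) hle
    exact ⟨p, hp⟩
  choose σ hσ using hlim
  have hUne : (U : Filter ℕ).NeBot := U.neBot
  -- Busemann values of σ
  have hσB : ∀ t : ℝ, busemann δ (σ t) = a - t := by
    intro t
    have h1 : Tendsto (fun n => busemann δ (d n t)) U (𝓝 (busemann δ (σ t))) :=
      ((busemann_lipschitzWith (isRay_of_isLine hδ)).continuous.tendsto _).comp (hσ t)
    have h2 : Tendsto (fun n => busemann δ (d n t)) U (𝓝 (a - t)) :=
      (hBpos t).mono_left hUle
    exact tendsto_nhds_unique h1 h2
  have hσB' : ∀ t : ℝ, busemann (negRay δ) (σ t) = -a + t := by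
    intro t
    have h1 : Tendsto (fun n => busemann (negRay δ) (d n t)) U (𝓝 (busemann (negRay δ) (σ t))) :=
      ((busemann_lipschitzWith (isRay_of_isLine (negRay_isLine hδ))).continuous.tendsto _).comp
        (hσ t)
    have h2 : Tendsto (fun n => busemann (negRay δ) (d n t)) U (𝓝 (-a + t)) :=
      (hBneg t).mono_left hUle
    exact tendsto_nhds_unique h1 h2
  -- σ 0 = x
  have hσ0 : σ 0 = x := by
    have h1 : Tendsto (fun n => d n 0) U (𝓝 x) := by
      have : (fun n : ℕ => d n 0) = fun n => x := by
        funext n; rw [hd]; simp only [le_refl, if_pos]; exact hc0 n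
      rw [this]; exact tendsto_const_nhds
    exact tendsto_nhds_unique (hσ 0) h1
  -- IsLine σ
  have hline : IsLine σ := by
    intro s t
    apply le_antisymm
    · have h1 : Tendsto (fun n => dist (d n s) (d n t)) U (𝓝 (dist (σ s) (σ t))) :=
        (hσ s).dist (hσ t)
      apply le_of_tendsto h1
      apply hUle
      filter_upwards [hdist s, hdist t, hLtend.eventually_ge_atTop (max |s| |t|),
        hL'tend.eventually_ge_atTop (max |s| |t|)] with n hns hnt hnL hnL'
      by_cases hs : 0 ≤ s <;> by_cases ht : 0 ≤ t
      · rw [hd]; simp only [hs, ht, if_pos]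
        have hsL : s ≤ dist x (δ (n:ℝ)) :=
          le_trans (le_trans (le_abs_self s) (le_max_left _ _)) hnL
        have htL : t ≤ dist x (δ (n:ℝ)) :=
          le_trans (le_trans (le_abs_self t) (le_max_right _ _)) hnL
        exact le_of_eq (hc2 n s t ⟨hs, hsL⟩ ⟨ht, htL⟩)
      · push_neg at ht
        have := dist_triangle (d n s) x (d n t)
        rw [dist_comm (d n s) x, hns, hnt, abs_of_nonneg hs, abs_of_neg ht] at this
        rw [abs_of_nonneg (by linarith : (0:ℝ) ≤ s - t)]
        linarith
      · push_neg at hs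
        have := dist_triangle (d n s) x (d n t)
        rw [dist_comm (d n s) x, hns, hnt, abs_of_neg hs, abs_of_nonneg ht] at this
        rw [abs_of_nonpos (by linarith : s - t ≤ 0)]
        linarith
      · push_neg at hs ht
        rw [hd]; simp only [not_le.mpr hs, not_le.mpr ht, if_neg, if_false]
        have hsL : -s ≤ dist x (δ (-(n:ℝ))) :=
          le_trans (le_trans (neg_le_abs s) (le_max_left _ _)) hnL'
        have htL : -t ≤ dist x (δ (-(n:ℝ))) :=
          le_trans (le_trans (neg_le_abs t) (le_max_right _ _)) hnL'
        have h2 := hc'2 n (-s) (-t) ⟨by linarith, hsL⟩ ⟨by linarith, htL⟩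
        rw [h2, neg_sub_neg, abs_sub_comm]
    · have hlipd := (busemann_lipschitzWith (isRay_of_isLine hδ)).dist_le_mul (σ s) (σ t)
      rw [NNReal.coe_one, one_mul, Real.dist_eq, hσB s, hσB t] at hlipd
      have : |a - s - (a - t)| = |s - t| := by rw [show a - s - (a - t) = -(s - t) by ring, abs_neg]
      rw [this] at hlipd
      exact hlipd
  refine ⟨σ, hline, hσ0, ⟨?_, fun t => ⟨?_, ?_⟩⟩⟩
  · rw [hσB 0, hσB' 0]; ring
  · rw [hσB t, hσB 0]; ring
  · rw [hσB' t, hσB' 0]; ring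

end Exist

/-- for lines `γ₁ ≺ γ` and `γ₂ ≺ γ` (with `γ` having the uniqueness
property in a proper geodesic space), `γ₁ ∼ γ₂` iff their barrier functions agree. -/
theorem sim_iff_barrier_eq [ProperSpace M] (hM : IsGeodesicSpace M)
    (γ : ℝ → M) (hγ : IsLine γ) (huniq : HasUniqueCalibLine γ)
    (γ₁ γ₂ : ℝ → M) (h₁ : IsLine γ₁) (h₂ : IsLine γ₂)
    (hp₁ : Prec γ₁ γ) (hp₂ : Prec γ₂ γ) :
    (Prec γ₁ γ₂ ∧ Prec γ₂ γ₁) ↔ ∀ x : M, barrier γ₁ x = barrier γ₂ x := by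
  constructor
  · rintro ⟨h12, h21⟩ x
    exact le_antisymm (barrier_mono h₁ h21 x) (barrier_mono h₂ h12 x)
  · intro hbar
    constructor
    · have hz : barrier γ₂ (γ₁ 0) = 0 := by
        rw [← hbar (γ₁ 0)]; exact barrier_line_apply h₁ 0
      obtain ⟨σ, hσline, hσ0, hσp⟩ := exists_calib_line hM h₂ (γ₁ 0) hz
      have hσγ : Prec σ γ := prec_trans hγ hσp hp₂
      have hzγ : barrier γ (γ₁ 0) = 0 := hp₁.1
      have heq := huniq (γ₁ 0) hzγ σ γ₁ hσline h₁ hσ0 rfl hσγ hp₁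
      rwa [heq] at hσp
    · have hz : barrier γ₁ (γ₂ 0) = 0 := by
        rw [hbar (γ₂ 0)]; exact barrier_line_apply h₂ 0
      obtain ⟨σ, hσline, hσ0, hσp⟩ := exists_calib_line hM h₁ (γ₂ 0) hz
      have hσγ : Prec σ γ := prec_trans hγ hσp hp₁
      have hzγ : barrier γ (γ₂ 0) = 0 := hp₂.1
      have heq := huniq (γ₂ 0) hzγ σ γ₂ hσline h₂ hσ0 rfl hσγ hp₂
      rwa [heq] at hσp
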